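/- For every t ∈ (0,1), √(1−t²) + (π − arccos t)/t > π. -/

import Mathlib

open Real

noncomputable def lineF (x : ℝ) : ℝ :=
  x * Real.sqrt (1 - x ^ 2) + Real.arcsin x + π / 2 - π * x

lemma lineF_hasDerivAt {x : ℝ} (hx : x ∈ Set.Ioo (0 : ℝ) 1) :
    HasDerivAt lineF (2 * Real.sqrt (1 - x ^ 2) - π) x := by
  obtain ⟨h0, h1⟩ := hx
  have hx2 : (0 : ℝ) < 1 - x ^ 2 := by nlinarith
  have hs : 0 < Real.sqrt (1 - x ^ 2) := Real.sqrt_pos.mpr hx2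
  have hsq : Real.sqrt (1 - x ^ 2) ^ 2 = 1 - x ^ 2 := Real.sq_sqrt hx2.le
  have hinner : HasDerivAt (fun y : ℝ => 1 - y ^ 2) (-(2 * x)) x := by
    simpa using ((hasDerivAt_pow 2 x).const_sub 1)
  have hsqrt : HasDerivAt (fun y : ℝ => Real.sqrt (1 - y ^ 2))
      (1 / (2 * Real.sqrt (1 - x ^ 2)) * (-(2 * x))) x :=
    (Real.hasDerivAt_sqrt hx2.ne').comp x hinner
  have hmul : HasDerivAt (fun y : ℝ => y * Real.sqrt (1 - y ^ 2))
      (1 * Real.sqrt (1 - x ^ 2) + x * (1 / (2 * Real.sqrt (1 - x ^ 2)) * (-(2 * x)))) x :=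
    (hasDerivAt_id x).mul hsqrt
  have harcsin : HasDerivAt Real.arcsin (1 / Real.sqrt (1 - x ^ 2)) x :=
    Real.hasDerivAt_arcsin (by linarith) (ne_of_lt h1)
  have hlin : HasDerivAt (fun y : ℝ => π * y) π x := by
    simpa using (hasDerivAt_id x).const_mul π
  have h := ((hmul.add harcsin).add_const (π / 2)).sub hlin
  refine h.congr_deriv ?_
  have hsne : Real.sqrt (1 - x ^ 2) ≠ 0 := ne_of_gt hs
  field_simp
  nlinarith [hsq]

lemma lineF_anti : StrictAntiOn lineF (Set.Icc (0 : ℝ) 1) := by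
  apply strictAntiOn_of_deriv_neg (convex_Icc 0 1)
  · unfold lineF
    apply Continuous.continuousOn
    have := Real.continuous_arcsin
    continuity
  · intro x hx
    rw [interior_Icc] at hx
    rw [(lineF_hasDerivAt hx).deriv]
    have h1 : Real.sqrt (1 - x ^ 2) ≤ 1 := Real.sqrt_le_one.mpr (by nlinarith [hx.1, hx.2])
    linarith [Real.pi_gt_three]

theorem line_density_ratio_gt_pi (t : ℝ) (ht : t ∈ Set.Ioo (0 : ℝ) 1) :
    Real.sqrt (1 - t ^ 2) + (π - arccos t) / t > π := by
  obtain ⟨h0, h1⟩ := ht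
  have hf : lineF 1 < lineF t :=
    lineF_anti ⟨h0.le, h1.le⟩ ⟨zero_le_one, le_refl 1⟩ h1
  have hf1 : lineF 1 = 0 := by
    simp [lineF, Real.arcsin_one]
  rw [hf1] at hf
  have hft : 0 < t * Real.sqrt (1 - t ^ 2) + Real.arcsin t + π / 2 - π * t := hf
  have harc : Real.arccos t = π / 2 - Real.arcsin t := Real.arccos_eq_pi_div_two_sub_arcsin t
  rw [gt_iff_lt, ← sub_lt_iff_lt_add', lt_div_iff₀ h0, harc]
  nlinarith [hft]
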